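/- With the setup above, let λ_0(s) denote the smallest eigenvalue of H(s) and λ_1(s) the smallest eigenvalue of H(s) that is ≥ s E_0. Let s* = A_1/(A_1+1). Then for all s ∈ [0, s*), the spectral gap satisfies λ_1(s) - λ_0(s) ≥ (A_1/A_2)·(s* - s)/(1 - s*). -/

import Mathlib

open Matrix Finset
open scoped ComplexOrder

/-- The initial state `|ψ₀⟩ = ∑_k √(d_k/N) |k⟩`. -/
noncomputable def psi0 {M : ℕ} (d : Fin M → ℝ) (N : ℕ) : Fin M → ℂ :=
  fun k => ((Real.sqrt (d k / N) : ℝ) : ℂ)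

/-- The adiabatic Hamiltonian `H(s) = -(1-s)|ψ₀⟩⟨ψ₀| + s H_z`. -/
noncomputable def Hadiab {M : ℕ} (E d : Fin M → ℝ) (N : ℕ) (s : ℝ) :
    Matrix (Fin M) (Fin M) ℂ :=
  (-(1 - s) : ℂ) • vecMulVec (psi0 d N) (star (psi0 d N)) +
    (s : ℂ) • diagonal (fun k => (E k : ℂ))

/-- `A_1 = (1/N) ∑_{k=1}^{M-1} d_k/(E_k - E_0)`. -/
noncomputable def A1spec {M : ℕ} [NeZero M] (E d : Fin M → ℝ) (N : ℕ) : ℝ :=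
  (1 / (N : ℝ)) * ∑ k ∈ univ.erase 0, d k / (E k - E 0)

/-- `A_2 = (1/N) ∑_{k=1}^{M-1} d_k/(E_k - E_0)²`. -/
noncomputable def A2spec {M : ℕ} [NeZero M] (E d : Fin M → ℝ) (N : ℕ) : ℝ :=
  (1 / (N : ℝ)) * ∑ k ∈ univ.erase 0, d k / (E k - E 0) ^ 2

/-- Rayleigh quotient lower bound: the least eigenvalue bounds every Rayleigh quotient. -/
lemma rayleigh_lb {M : ℕ} (A : Matrix (Fin M) (Fin M) ℂ) (hA : A.IsHermitian) (lam0 : ℝ)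
    (hlb : ∀ μ : ℝ, (∃ v : Fin M → ℂ, v ≠ 0 ∧ A *ᵥ v = (μ : ℂ) • v) → lam0 ≤ μ)
    (φ : Fin M → ℂ) :
    lam0 * (star φ ⬝ᵥ φ).re ≤ (star φ ⬝ᵥ (A *ᵥ φ)).re := by
  set B : Matrix (Fin M) (Fin M) ℂ := A - (lam0 : ℂ) • 1 with hB
  have hBh : B.IsHermitian := by
    apply IsHermitian.sub hA
    unfold Matrix.IsHermitian
    rw [conjTranspose_smul, conjTranspose_one]
    simp [Complex.star_def, Complex.conj_ofReal]
  have hev : ∀ i, 0 ≤ hBh.eigenvalues i := by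
    intro i
    have h := hBh.mulVec_eigenvectorBasis i
    set v : Fin M → ℂ := ⇑(hBh.eigenvectorBasis i) with hv
    have hvne : v ≠ 0 := by
      intro h0
      exact hBh.eigenvectorBasis.orthonormal.ne_zero i (by ext j; exact congrFun h0 j)
    have hBv : B *ᵥ v = A *ᵥ v - (lam0 : ℂ) • v := by
      rw [hB, sub_mulVec, smul_mulVec, one_mulVec]
    have hAv : A *ᵥ v = ((hBh.eigenvalues i + lam0 : ℝ) : ℂ) • v := by
      have h2 : A *ᵥ v - (lam0 : ℂ) • v = (hBh.eigenvalues i) • v := by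
        rw [← hBv]; exact h
      have h3 : A *ᵥ v = (hBh.eigenvalues i) • v + (lam0 : ℂ) • v :=
        eq_add_of_sub_eq h2
      rw [h3]
      ext j
      simp [Pi.smul_apply, Complex.real_smul]
      ring
    have := hlb _ ⟨v, hvne, hAv⟩
    linarith
  have hpsd : B.PosSemidef := hBh.posSemidef_iff_eigenvalues_nonneg.mpr fun i => hev i
  have h2 := hpsd.dotProduct_mulVec_nonneg φ
  have hBφ : star φ ⬝ᵥ (B *ᵥ φ) = star φ ⬝ᵥ (A *ᵥ φ) - (lam0 : ℂ) * (star φ ⬝ᵥ φ) := by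
    rw [hB, sub_mulVec, smul_mulVec, one_mulVec, dotProduct_sub, dotProduct_smul]
    simp [smul_eq_mul]
  rw [hBφ] at h2
  have h3 : (0:ℝ) ≤ (star φ ⬝ᵥ (A *ᵥ φ) - (lam0 : ℂ) * (star φ ⬝ᵥ φ)).re := by
    rw [Complex.le_def] at h2
    simpa using h2.1
  simp only [Complex.sub_re, Complex.mul_re, Complex.ofReal_re, Complex.ofReal_im] at h3
  linarith

lemma hadiab_isHermitian {M : ℕ} (E d : Fin M → ℝ) (N : ℕ) (s : ℝ) :
    (Hadiab E d N s).IsHermitian := by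
  have hψ : star (psi0 d N) = psi0 d N := by
    funext k; simp [psi0, Complex.star_def, Complex.conj_ofReal]
  unfold Matrix.IsHermitian Hadiab
  rw [conjTranspose_add, conjTranspose_smul, conjTranspose_smul, diagonal_conjTranspose]
  congr 1
  · rw [hψ]
    congr 1
    · simp [Complex.star_def, Complex.conj_ofReal]
    · ext i j
      simp [conjTranspose_apply, vecMulVec_apply, psi0, Complex.conj_ofReal, mul_comm,
        ← Complex.ofReal_mul]
  · have h' : (star fun k => ((E k : ℝ) : ℂ)) = fun k => ((E k : ℝ) : ℂ) := by
      funext k; exact Complex.conj_ofReal _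
    rw [h']
    congr 1
    simp [Complex.star_def, Complex.conj_ofReal]

lemma hadiab_mulVec {M : ℕ} (E d : Fin M → ℝ) (N : ℕ) (s : ℝ) (φ : Fin M → ℂ) :
    (Hadiab E d N s) *ᵥ φ = (-(1-s) : ℂ) • ((star (psi0 d N) ⬝ᵥ φ) • psi0 d N)
      + (s : ℂ) • fun k => (E k : ℂ) * φ k := by
  unfold Hadiab
  rw [add_mulVec, smul_mulVec, smul_mulVec]
  congr 1
  · congr 1
    ext i
    simp only [mulVec, vecMulVec_apply, dotProduct, Pi.smul_apply, smul_eq_mul,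
      Finset.sum_mul]
    exact Finset.sum_congr rfl fun j _ => by ring
  · congr 1
    ext i
    simp [mulVec_diagonal]

set_option maxHeartbeats 1000000 in
/-- **Gap bound to the left of the avoided crossing.** Let `λ₀(s)` be the smallest
eigenvalue of `H(s)` and `λ₁(s)` the smallest eigenvalue of `H(s)` that is `≥ s E_0`.
With `s* = A₁/(A₁+1)`, for all `s ∈ [0, s*)`,
`λ₁(s) - λ₀(s) ≥ (A₁/A₂)·(s* - s)/(1 - s*)`. -/
theorem gap_left_of_avoided_crossing {M N : ℕ} [NeZero M]
    (E : Fin M → ℝ) (hE : StrictMono E)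
    (d : Fin M → ℝ) (hd : ∀ k, 0 < d k) (hsum : ∑ k, d k = N) (hN : 0 < N)
    (s : ℝ) (hs0 : 0 ≤ s) (hs1 : s < A1spec E d N / (A1spec E d N + 1))
    (lam0 lam1 : ℝ)
    (h0 : IsLeast {lam : ℝ |
        ∃ v : Fin M → ℂ, v ≠ 0 ∧ (Hadiab E d N s).mulVec v = (lam : ℂ) • v} lam0)
    (h1 : IsLeast {lam : ℝ |
        (∃ v : Fin M → ℂ, v ≠ 0 ∧ (Hadiab E d N s).mulVec v = (lam : ℂ) • v) ∧
          s * E 0 ≤ lam} lam1) :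
    lam1 - lam0 ≥ (A1spec E d N / A2spec E d N) *
      (A1spec E d N / (A1spec E d N + 1) - s) /
        (1 - A1spec E d N / (A1spec E d N + 1)) := by
  classical
  have hNR : (0:ℝ) < N := by exact_mod_cast hN
  have hNe : (N:ℝ) ≠ 0 := ne_of_gt hNR
  have hpos : ∀ k : Fin M, k ≠ 0 → 0 < E k - E 0 := fun k hk =>
    sub_pos.mpr (hE (lt_of_le_of_ne (by simp [Fin.le_def]) (Ne.symm hk)))
  -- degenerate case: M = 1
  by_cases hM : ∀ k : Fin M, k = 0
  · exfalso
    have he : (univ.erase (0 : Fin M)) = ∅ := by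
      ext k; simp [hM k]
    have hA10 : A1spec E d N = 0 := by rw [A1spec, he]; simp
    rw [hA10] at hs1
    norm_num at hs1
    linarith
  push_neg at hM
  obtain ⟨k₀, hk₀⟩ := hM
  have hne : (univ.erase (0 : Fin M)).Nonempty :=
    ⟨k₀, Finset.mem_erase.mpr ⟨hk₀, Finset.mem_univ _⟩⟩
  set c : ℝ := ∑ k ∈ univ.erase 0, d k / (E k - E 0) with hc
  set q : ℝ := ∑ k ∈ univ.erase 0, d k / (E k - E 0) ^ 2 with hq
  have hcpos : 0 < c := Finset.sum_pos
    (fun k hk => div_pos (hd k) (hpos k (Finset.mem_erase.mp hk).1)) hne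
  have hqpos : 0 < q := Finset.sum_pos
    (fun k hk => div_pos (hd k) (pow_pos (hpos k (Finset.mem_erase.mp hk).1) 2)) hne
  have hca : A1spec E d N = (1/N) * c := rfl
  have hqa : A2spec E d N = (1/N) * q := rfl
  have hapos : 0 < A1spec E d N := by rw [hca]; positivity
  have hbpos : 0 < A2spec E d N := by rw [hqa]; positivity
  have hcN : c = N * A1spec E d N := by rw [hca]; field_simp
  have hqN : q = N * A2spec E d N := by rw [hqa]; field_simp
  -- the trial vector
  set r : Fin M → ℝ := fun k => if k = 0 then 0 else Real.sqrt (d k) / (E k - E 0) with hr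
  set φ : Fin M → ℂ := fun k => (r k : ℂ) with hφ
  have hr0 : r 0 = 0 := if_pos rfl
  have hrk : ∀ k : Fin M, k ≠ 0 → r k = Real.sqrt (d k) / (E k - E 0) :=
    fun k hk => if_neg hk
  have hstarφ : star φ = φ := funext fun k => Complex.conj_ofReal _
  have hstarψ : star (psi0 d N) = psi0 d N := by
    funext k; simp [psi0, Complex.star_def, Complex.conj_ofReal]
  -- real sum computations
  have hq' : ∑ k, r k ^ 2 = q := by
    rw [hq, ← Finset.sum_erase univ (f := fun k => r k ^ 2) (show r 0 ^ 2 = 0 by simp [hr0])]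
    exact Finset.sum_congr rfl fun k hk => by
      rw [hrk k (Finset.mem_erase.mp hk).1, div_pow, Real.sq_sqrt (hd k).le]
  have hc' : ∑ k, Real.sqrt (d k / N) * r k = c / Real.sqrt N := by
    rw [hc, Finset.sum_div,
      ← Finset.sum_erase univ (f := fun k => Real.sqrt (d k / N) * r k)
        (show Real.sqrt (d 0 / N) * r 0 = 0 by simp [hr0])]
    refine Finset.sum_congr rfl fun k hk => ?_
    have hk0 := (Finset.mem_erase.mp hk).1
    have hEk := hpos k hk0
    rw [hrk k hk0, Real.sqrt_div (hd k).le]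
    rw [div_mul_div_comm, Real.mul_self_sqrt (hd k).le]
    rw [div_div, mul_comm]
  have hE' : ∑ k, E k * r k ^ 2 = c + E 0 * q := by
    rw [hc, hq, Finset.mul_sum, ← Finset.sum_add_distrib,
      ← Finset.sum_erase univ (f := fun k => E k * r k ^ 2)
        (show E 0 * r 0 ^ 2 = 0 by simp [hr0])]
    refine Finset.sum_congr rfl fun k hk => ?_
    have hk0 := (Finset.mem_erase.mp hk).1
    have hEk := (hpos k hk0).ne'
    rw [hrk k hk0, div_pow, Real.sq_sqrt (hd k).le]
    field_simp
    ring
  -- complex dot products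
  have hφφ : star φ ⬝ᵥ φ = ((q : ℝ) : ℂ) := by
    rw [hstarφ, dotProduct, ← hq']
    push_cast
    refine Finset.sum_congr rfl fun k _ => ?_
    simp only [hφ, psi0]
    try push_cast
    try ring
  have hψφ : star (psi0 d N) ⬝ᵥ φ = ((c / Real.sqrt N : ℝ) : ℂ) := by
    rw [hstarψ, dotProduct, ← hc']
    push_cast
    refine Finset.sum_congr rfl fun k _ => ?_
    simp only [hφ, psi0]
    try push_cast
    try ring
  have hφψ : star φ ⬝ᵥ psi0 d N = ((c / Real.sqrt N : ℝ) : ℂ) := by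
    rw [hstarφ, dotProduct, ← hc']
    push_cast
    refine Finset.sum_congr rfl fun k _ => ?_
    simp only [hφ, psi0]
    try push_cast
    try ring
  have hdiag : star φ ⬝ᵥ (fun k => (E k : ℂ) * φ k) = ((c + E 0 * q : ℝ) : ℂ) := by
    rw [hstarφ, dotProduct, ← hE']
    push_cast
    refine Finset.sum_congr rfl fun k _ => ?_
    simp only [hφ, psi0]
    try push_cast
    try ring
  have hsq : (c / Real.sqrt N) * (c / Real.sqrt N) = c ^ 2 / N := by
    rw [div_mul_div_comm, Real.mul_self_sqrt (le_of_lt hNR)]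
    ring
  have hre : star φ ⬝ᵥ ((Hadiab E d N s) *ᵥ φ)
      = ((-(1-s) * (c ^ 2 / N) + s * (c + E 0 * q) : ℝ) : ℂ) := by
    rw [hadiab_mulVec, dotProduct_add]
    simp only [dotProduct_smul, smul_eq_mul]
    rw [hψφ, hφψ, hdiag, ← hsq]
    push_cast
    ring
  -- Rayleigh bound
  have key := rayleigh_lb (Hadiab E d N s) (hadiab_isHermitian E d N s) lam0
    (fun μ hμ => h0.2 hμ) φ
  rw [hφφ, hre, Complex.ofReal_re, Complex.ofReal_re] at key
  -- final arithmetic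
  set a := A1spec E d N with hadef
  set b := A2spec E d N with hbdef
  have key3 : lam0 * b ≤ -(1-s)*a^2 + s*a + s*(E 0)*b := by
    rw [hcN, hqN] at key
    have h' : (N:ℝ) * (lam0 * b) ≤ (N:ℝ) * (-(1-s)*a^2 + s*a + s*(E 0)*b) := by
      have hexp : ((N:ℝ) * a)^2 / N = N * a^2 := by field_simp
      nlinarith [key]
    exact le_of_mul_le_mul_left h' hNR
  have hRHS : (a / b) * (a/(a+1) - s) / (1 - a/(a+1)) = ((1-s)*a^2 - s*a)/b := by
    have h1' : a + 1 ≠ 0 := by positivity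
    field_simp
    ring
  rw [ge_iff_le, hRHS, div_le_iff₀ hbpos]
  have hlam1 : s * E 0 ≤ lam1 := h1.1.2
  nlinarith [mul_le_mul_of_nonneg_right hlam1 hbpos.le, key3]
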